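/- (Nonlinear Korovkin theorem for compact metric spaces, nonnegative case) Let X be a compact metric space, γ a separating function on X, and (T_n) a sequence of sublinear and monotone operators from C(X) to C(X) such that T_n(1) → 1 uniformly on X and T_n(γ_x)(x) → 0 uniformly in x ∈ X, where γ_x(y) = γ(x,y). Then T_n(f) → f uniformly on X for every nonnegative f ∈ C(X). -/

import Mathlib

open Filter

/-- If `γ` is a continuous nonnegative separating function on a compact metric
space, then small `γ` forces small distance. -/
lemma gamma_small_of_sep {X : Type*} [MetricSpace X] [CompactSpace X]
    (γ : X × X → ℝ) (hγc : Continuous γ) (hγ0 : ∀ p, 0 ≤ γ p)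
    (hγsep : ∀ x y, γ (x, y) = 0 → x = y)
    {η : ℝ} (hη : 0 < η) :
    ∃ δ > 0, ∀ x y, γ (x, y) < δ → dist x y < η := by
  set K : Set (X × X) := {p | η ≤ dist p.1 p.2} with hKdef
  have hKcl : IsClosed K := isClosed_le continuous_const continuous_dist
  have hKc : IsCompact K := hKcl.isCompact
  rcases K.eq_empty_or_nonempty with h | h
  · refine ⟨1, one_pos, fun x y _ => ?_⟩
    by_contra hcon
    push_neg at hcon
    have : (x, y) ∈ K := hcon
    simp [h] at this
  · obtain ⟨p, hpK, hpmin⟩ := hKc.exists_isMinOn h hγc.continuousOn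
    have hp0 : 0 < γ p := by
      rcases lt_or_eq_of_le (hγ0 p) with h' | h'
      · exact h'
      · exfalso
        have heq : p.1 = p.2 := hγsep p.1 p.2 (by rw [← h'])
        have : dist p.1 p.2 = 0 := by rw [heq, dist_self]
        have := hpK
        simp only [hKdef, Set.mem_setOf_eq] at this
        linarith
    refine ⟨γ p, hp0, fun x y hxy => ?_⟩
    by_contra hcon
    push_neg at hcon
    have hmem : (x, y) ∈ K := hcon
    have := hpmin hmem
    simp only [Set.mem_setOf_eq] at this
    exact absurd hxy (not_lt.mpr this)

/-- Korovkin-type estimate: `|f y - f x| ≤ ε + C γ(x,y)`. -/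
lemma korovkin_estimate {X : Type*} [MetricSpace X] [CompactSpace X]
    (γ : X × X → ℝ) (hγc : Continuous γ) (hγ0 : ∀ p, 0 ≤ γ p)
    (hγsep : ∀ x y, γ (x, y) = 0 → x = y)
    (f : C(X, ℝ)) {ε : ℝ} (hε : 0 < ε) :
    ∃ C ≥ 0, ∀ x y, |f y - f x| ≤ ε + C * γ (x, y) := by
  have huc : UniformContinuous f := CompactSpace.uniformContinuous_of_continuous f.continuous
  rw [Metric.uniformContinuous_iff] at huc
  obtain ⟨η, hη, hηf⟩ := huc ε hε
  obtain ⟨δ, hδ, hδγ⟩ := gamma_small_of_sep γ hγc hγ0 hγsep hη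
  refine ⟨2 * ‖f‖ / δ, by positivity, fun x y => ?_⟩
  have hCγ0 : 0 ≤ 2 * ‖f‖ / δ * γ (x, y) :=
    mul_nonneg (by positivity) (hγ0 _)
  rcases lt_or_ge (γ (x, y)) δ with h' | h'
  · have := hηf (hδγ x y h')
    rw [Real.dist_eq] at this
    have : |f y - f x| ≤ ε := by rw [abs_sub_comm]; linarith
    linarith
  · have hfb : |f y - f x| ≤ 2 * ‖f‖ := by
      have h1 : |f y| ≤ ‖f‖ := f.norm_coe_le_norm y
      have h2 : |f x| ≤ ‖f‖ := f.norm_coe_le_norm x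
      calc |f y - f x| ≤ |f y| + |f x| := abs_sub _ _
        _ ≤ 2 * ‖f‖ := by linarith
    have hC : 2 * ‖f‖ ≤ 2 * ‖f‖ / δ * γ (x, y) := by
      rw [div_mul_eq_mul_div, le_div_iff₀ hδ]
      have : 0 ≤ 2 * ‖f‖ := by positivity
      nlinarith
    linarith


/-- Pure arithmetic core of the Korovkin estimate. -/
lemma korovkin_arith (M ε C ε₁ A B G fx : ℝ) (hM0 : 0 ≤ M) (hfx0 : 0 ≤ fx)
    (hfxM : fx ≤ M) (hC : 0 ≤ C) (hε : 0 < ε) (hε₁ : 0 < ε₁)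
    (hb1a : B - 1 ≤ ε₁) (hb1b : 1 - B ≤ ε₁) (hb2a : G ≤ ε₁)
    (hub : A ≤ (fx + ε) * B + C * G)
    (hlb : fx * B ≤ A + ε * B + C * G)
    (hD : (M + ε + C + 1) * ε₁ = ε) :
    fx - A < ε + ε ∧ A - fx < ε + ε := by
  have h4 : ε * B ≤ ε * (1 + ε₁) :=
    mul_le_mul_of_nonneg_left (by linarith) hε.le
  have h5 : C * G ≤ C * ε₁ := mul_le_mul_of_nonneg_left hb2a hC
  constructor
  · have h3 : fx * (1 - B) ≤ M * ε₁ := by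
      rcases le_or_gt (1 - B) 0 with h | h
      · nlinarith
      · exact mul_le_mul hfxM hb1b h.le hM0
    nlinarith
  · have h3 : fx * (B - 1) ≤ M * ε₁ := by
      rcases le_or_gt (B - 1) 0 with h | h
      · nlinarith
      · exact mul_le_mul hfxM hb1a h.le hM0
    nlinarith

/-- Nonlinear Korovkin theorem on a compact metric space, case of nonnegative
functions: if the sublinear monotone operators `T_n` satisfy `T_n 1 → 1` uniformly
and `T_n(γ_x)(x) → 0` uniformly in `x`, then `T_n f → f` uniformly for every
nonnegative `f ∈ C(X)`. -/
theorem stmt11 {X : Type*} [MetricSpace X] [CompactSpace X]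
    (γ : X × X → ℝ) (hγc : Continuous γ) (hγ0 : ∀ p, 0 ≤ γ p)
    (hγsep : ∀ x y, γ (x, y) = 0 → x = y)
    (Γ : X → C(X, ℝ)) (hΓ : ∀ x y, Γ x y = γ (x, y))
    (T : ℕ → C(X, ℝ) → C(X, ℝ))
    (hsub : ∀ n (f g : C(X, ℝ)), T n (f + g) ≤ T n f + T n g)
    (hhom : ∀ n (a : ℝ) (f : C(X, ℝ)), 0 ≤ a → T n (a • f) = a • T n f)
    (hmono : ∀ n (f g : C(X, ℝ)), f ≤ g → T n f ≤ T n g)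
    (h1 : TendstoUniformly (fun n x => T n 1 x) (fun _ => 1) atTop)
    (h2 : TendstoUniformly (fun n x => T n (Γ x) x) (fun _ => 0) atTop) :
    ∀ f : C(X, ℝ), 0 ≤ f →
      TendstoUniformly (fun n x => T n f x) (fun x => f x) atTop := by
  intro f hf
  have hf' : ∀ x, 0 ≤ f x := fun x => by
    have := hf; rw [ContinuousMap.le_def] at this; simpa using this x
  set M : ℝ := ‖f‖ with hM
  have hM0 : 0 ≤ M := norm_nonneg f
  have hfM : ∀ x, f x ≤ M := fun x => by
    have := f.norm_coe_le_norm x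
    exact le_trans (le_abs_self _) this
  rw [Metric.tendstoUniformly_iff]
  intro ε₀ hε₀
  set ε : ℝ := ε₀ / 2 with hεdef
  have hε : 0 < ε := by positivity
  obtain ⟨C, hC, hkey⟩ := korovkin_estimate γ hγc hγ0 hγsep f hε
  set D : ℝ := M + ε + C + 1 with hDdef
  have hD : 0 < D := by positivity
  set ε₁ : ℝ := ε₀ / (2 * D) with hε₁def
  have hε₁ : 0 < ε₁ := by positivity
  have hDε₁ : D * ε₁ = ε := by
    rw [hε₁def, hεdef]
    field_simp
  rw [Metric.tendstoUniformly_iff] at h1 h2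
  filter_upwards [h1 ε₁ hε₁, h2 ε₁ hε₁] with n hn1 hn2
  intro x
  -- bounds from hn1, hn2
  have hb1 : |1 - T n 1 x| < ε₁ := by
    have := hn1 x; rwa [Real.dist_eq] at this
  have hb2 : |T n (Γ x) x| < ε₁ := by
    have := hn2 x; rw [Real.dist_eq] at this
    rwa [zero_sub, abs_neg] at this
  have hb1a : T n 1 x - 1 ≤ ε₁ := by
    have := abs_lt.mp hb1; linarith [this.1]
  have hb1b : 1 - T n 1 x ≤ ε₁ := le_of_lt (lt_of_abs_lt hb1)
  have hb2a : T n (Γ x) x ≤ ε₁ := le_of_lt (lt_of_abs_lt hb2)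
  -- upper bound: T n f x ≤ (f x + ε) * T n 1 x + C * T n (Γ x) x
  have hub : T n f x ≤ (f x + ε) * T n 1 x + C * T n (Γ x) x := by
    have hfxε : (0:ℝ) ≤ f x + ε := by linarith [hf' x]
    have hle : f ≤ (f x + ε) • (1 : C(X, ℝ)) + C • Γ x := by
      rw [ContinuousMap.le_def]
      intro y
      have := hkey x y
      have h' := abs_le.mp this
      simp only [ContinuousMap.add_apply, ContinuousMap.smul_apply,
        ContinuousMap.one_apply, smul_eq_mul, hΓ]
      linarith [h'.1]
    calc T n f x ≤ T n ((f x + ε) • 1 + C • Γ x) x :=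
          ContinuousMap.le_def.mp (hmono n _ _ hle) x
      _ ≤ T n ((f x + ε) • 1) x + T n (C • Γ x) x :=
          ContinuousMap.le_def.mp (hsub n _ _) x
      _ = (f x + ε) * T n 1 x + C * T n (Γ x) x := by
          rw [hhom n _ _ hfxε, hhom n _ _ hC]
          simp [smul_eq_mul]
  -- lower bound
  have hlb : f x * T n 1 x ≤ T n f x + ε * T n 1 x + C * T n (Γ x) x := by
    have hle : (f x) • (1 : C(X, ℝ)) ≤ f + (ε • 1 + C • Γ x) := by
      rw [ContinuousMap.le_def]
      intro y
      have := hkey x y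
      have h' := abs_le.mp this
      simp only [ContinuousMap.add_apply, ContinuousMap.smul_apply,
        ContinuousMap.one_apply, smul_eq_mul, hΓ]
      linarith [h'.2]
    calc f x * T n 1 x = T n ((f x) • 1) x := by
          rw [hhom n _ _ (hf' x)]; simp [smul_eq_mul]
      _ ≤ T n (f + (ε • 1 + C • Γ x)) x :=
          ContinuousMap.le_def.mp (hmono n _ _ hle) x
      _ ≤ T n f x + T n (ε • 1 + C • Γ x) x :=
          ContinuousMap.le_def.mp (hsub n _ _) x
      _ ≤ T n f x + (T n (ε • 1) x + T n (C • Γ x) x) := by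
          have := ContinuousMap.le_def.mp (hsub n (ε • 1) (C • Γ x)) x
          simpa using add_le_add_left this (T n f x)
      _ = T n f x + ε * T n 1 x + C * T n (Γ x) x := by
          rw [hhom n _ _ (le_of_lt hε), hhom n _ _ hC]
          simp [smul_eq_mul]; ring
  have hD' : (M + ε + C + 1) * ε₁ = ε := by rw [← hDdef]; exact hDε₁
  obtain ⟨hL, hR⟩ := korovkin_arith M ε C ε₁ (T n f x) (T n 1 x) (T n (Γ x) x)
    (f x) hM0 (hf' x) (hfM x) hC hε hε₁ hb1a hb1b hb2a
    (by linarith [hub]) (by nlinarith [hlb]) hD'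
  rw [Real.dist_eq, abs_sub_lt_iff]
  constructor
  · linarith [hεdef]
  · linarith [hεdef]
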